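/- Let g ∈ SL(2,ℂ) have Iwasawa decomposition g = k'·n(z')·a(t') with k' = [[α,β],[−conj(β),conj(α)]] ∈ SU(2), z' ∈ ℂ, t' ∈ ℝ, and suppose d(g,e) ≤ C₀ for a fixed C₀ (so |z'|, |t'| are bounded by a constant depending on C₀). Fix T large (depending on C₀). There exist constants C, D > 0 depending only on C₀ and T such that: if 0 < δ < D and for every t ∈ [t'−1, t'+1] the point obtained by the Möbius-type action of k' on (z', e^{t}) ∈ ℍ³ has first coordinate of modulus at most δ and second coordinate in [e^{−T}, e^{T}], then |α·β| ≤ C·δ, hence either |α| ≤ C'δ or |β| ≤ C'δ (i.e., k' is within O(δ) of the union M ∪ w₀M), and additionally |z'| ≤ C''δ. -/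

import Mathlib

noncomputable section

/-- First coordinate of the action of `k' = [[α,β],[−conj β, conj α]]` on the point
`(z', e^t) ∈ ℍ³`. -/
def act1 (α β z' : ℂ) (t : ℝ) : ℂ :=
  ((α * z' + β) * star (-(star β) * z' + star α)
      - star α * β * (Real.exp (2*t) : ℝ)) /
    ((Complex.normSq (-(star β) * z' + star α)
      + Complex.normSq β * Real.exp (2*t) : ℝ) : ℂ)

/-- Second coordinate (the height) of the action of `k'` on `(z', e^t) ∈ ℍ³`. -/
def act2 (α β z' : ℂ) (t : ℝ) : ℝ :=
  Real.exp t /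
    (Complex.normSq (-(star β) * z' + star α) + Complex.normSq β * Real.exp (2*t))

lemma abs_star' (w : ℂ) : ‖star w‖ = ‖w‖ := by
  rw [show (star w) = (starRingEnd ℂ) w from rfl, Complex.norm_conj]

/-- Purely real auxiliary lemma combining the estimates. -/
lemma auxmain (C₀ E δ : ℝ) (hC₀ : 0 < C₀) (hE : 0 < E) (hδ : 0 < δ)
    (a b z : ℝ) (hb0 : 0 ≤ b) (hz0 : 0 ≤ z)
    (ha : 1/2 ≤ a) (hb1 : b ≤ 1)
    (hx : a*b ≤ 4*E*δ) (hzC : z ≤ C₀)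
    (hmain : a^2*z ≤ 5*E*δ + b^2*z + (a*b)*(1+C₀^2)) :
    b ≤ 100*(1+C₀)^2*E*δ ∧ z ≤ 100*(1+C₀)^2*E*δ := by
  have hEδ : 0 < E*δ := mul_pos hE hδ
  have p1 : 0 ≤ E*δ*C₀ := mul_nonneg hEδ.le hC₀.le
  have p2 : 0 ≤ E*δ*C₀*C₀ := mul_nonneg p1 hC₀.le
  have hb2x : b ≤ 2*(a*b) := by nlinarith [mul_nonneg (by linarith : (0:ℝ) ≤ 2*a-1) hb0]
  have hb8 : b ≤ 8*E*δ := by linarith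
  constructor
  · nlinarith [hEδ, p1, p2]
  · have hbz : b*z ≤ 8*E*δ*C₀ := mul_le_mul hb8 hzC hz0 (by positivity)
    have hb2z : b^2*z ≤ b*z := by
      nlinarith [mul_nonneg (mul_nonneg hb0 (sub_nonneg.mpr hb1)) hz0]
    have h2 : z/4 ≤ a^2*z := by
      nlinarith [mul_nonneg (mul_nonneg (sub_nonneg.mpr ha) (by linarith : (0:ℝ) ≤ a + 1/2)) hz0]
    have h3 : (a*b)*(1+C₀^2) ≤ 4*E*δ*(1+C₀^2) :=
      mul_le_mul_of_nonneg_right hx (by positivity)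
    nlinarith [hEδ, p1, p2, hmain, hbz, hb2z, h2, h3]

set_option maxHeartbeats 1000000

/-- If the geodesic segment `{k'·(z', e^t) : t ∈ [t'−1, t'+1]}` lies in the tube of
radius `δ` and height range `[e^{−T}, e^{T}]` around the vertical geodesic, then
`|αβ| ≤ Cδ`, hence `|α| ≤ Cδ` or `|β| ≤ Cδ`, and moreover `|z'| ≤ Cδ`. -/
theorem stmt_18 (C₀ : ℝ) (hC₀ : 0 < C₀) :
    ∃ T₀ > 0, ∀ T ≥ T₀, ∃ C > 0, ∃ D > 0, ∀ δ : ℝ, ∀ α β z' : ℂ, ∀ t' : ℝ,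
      0 < δ → δ < D → Complex.normSq α + Complex.normSq β = 1 →
      ‖z'‖ ≤ C₀ → |t'| ≤ C₀ →
      (∀ t ∈ Set.Icc (t' - 1) (t' + 1),
        ‖act1 α β z' t‖ ≤ δ ∧
        act2 α β z' t ∈ Set.Icc (Real.exp (-T)) (Real.exp T)) →
      ‖α * β‖ ≤ C * δ ∧
      (‖α‖ ≤ C * δ ∨ ‖β‖ ≤ C * δ) ∧
      ‖z'‖ ≤ C * δ := by
  refine ⟨1, one_pos, fun T hT => ?_⟩
  refine ⟨100*(1+C₀)^2*Real.exp (T+C₀), by positivity, 1, one_pos, ?_⟩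
  intro δ α β z' t' hδ hδD hnorm hz hT' htube
  obtain ⟨E, hE_def⟩ : ∃ E, E = Real.exp (T+C₀) := ⟨_, rfl⟩
  have hE : 0 < E := hE_def ▸ Real.exp_pos _
  have hEδ : 0 < E*δ := mul_pos hE hδ
  have p1 : 0 ≤ E*δ*C₀ := mul_nonneg hEδ.le hC₀.le
  have p2 : 0 ≤ E*δ*C₀*C₀ := mul_nonneg p1 hC₀.le
  obtain ⟨ht'l, ht'r⟩ := abs_le.mp hT'
  -- key bound on the numerator
  have key : ∀ t, t ∈ Set.Icc (t' - 1) (t' + 1) →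
      ‖(α * z' + β) * star (-(star β) * z' + star α)
        - star α * β * ((Real.exp (2*t) : ℝ) : ℂ)‖ ≤ δ * (Real.exp t * Real.exp T) := by
    intro t ht
    obtain ⟨h1, h2⟩ := htube t ht
    simp only [act1] at h1
    simp only [act2, Set.mem_Icc] at h2
    set Qt := Complex.normSq (-(star β) * z' + star α) + Complex.normSq β * Real.exp (2*t)
      with hQt
    have hQ0 : 0 ≤ Qt := by
      have := Complex.normSq_nonneg (-(star β) * z' + star α)
      have := Complex.normSq_nonneg β
      nlinarith [Real.exp_pos (2*t)]
    have hQne : Qt ≠ 0 := by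
      intro h0
      rw [h0, div_zero] at h2
      exact (Real.exp_pos (-T)).not_ge h2.1
    have hQpos : 0 < Qt := hQ0.lt_of_ne (Ne.symm hQne)
    have h2' : Real.exp (-T) * Qt ≤ Real.exp t := (le_div_iff₀ hQpos).mp h2.1
    have hprod : Real.exp (-T) * Real.exp T = 1 := by rw [← Real.exp_add]; simp
    have hQle : Qt ≤ Real.exp t * Real.exp T := by
      nlinarith [mul_le_mul_of_nonneg_right h2' (Real.exp_pos T).le]
    have h1' : ‖(α * z' + β) * star (-(star β) * z' + star α)
        - star α * β * ((Real.exp (2*t) : ℝ) : ℂ)‖ / Qt ≤ δ := by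
      rwa [norm_div, Complex.norm_real, Real.norm_eq_abs, abs_of_pos hQpos] at h1
    have := (div_le_iff₀ hQpos).mp h1'
    calc ‖(α * z' + β) * star (-(star β) * z' + star α)
          - star α * β * ((Real.exp (2*t) : ℝ) : ℂ)‖ ≤ δ * Qt := this
      _ ≤ δ * (Real.exp t * Real.exp T) := by
          exact mul_le_mul_of_nonneg_left hQle hδ.le
  have ht₁ : t' - 1 ∈ Set.Icc (t' - 1) (t' + 1) := by constructor <;> linarith
  have ht₂ : t' + 1 ∈ Set.Icc (t' - 1) (t' + 1) := by constructor <;> linarith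
  have k1 := key (t' - 1) ht₁
  have k2 := key (t' + 1) ht₂
  obtain ⟨x, hx_def⟩ : ∃ x, x = ‖α * β‖ := ⟨_, rfl⟩
  have hx0 : 0 ≤ x := hx_def ▸ norm_nonneg _
  have hstar : ‖star α * β‖ = x := by
    rw [norm_mul, abs_star', hx_def, norm_mul]
  -- difference of the two numerators
  obtain ⟨N, hN⟩ : ∃ N : ℝ → ℂ, N = fun t => (α * z' + β) * star (-(star β) * z' + star α)
      - star α * β * ((Real.exp (2*t) : ℝ) : ℂ) := ⟨_, rfl⟩
  have hNk : ∀ t, N t = (α * z' + β) * star (-(star β) * z' + star α)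
      - star α * β * ((Real.exp (2*t) : ℝ) : ℂ) := fun t => by rw [hN]
  rw [← hNk (t'-1)] at k1
  rw [← hNk (t'+1)] at k2
  have hdiff : N (t'-1) - N (t'+1)
      = star α * β * (((Real.exp (2*(t'+1)) - Real.exp (2*(t'-1))) : ℝ) : ℂ) := by
    simp only [hN]
    push_cast
    ring
  have hee : Real.exp (2*(t'-1)) ≤ Real.exp (2*(t'+1)) := Real.exp_le_exp.mpr (by linarith)
  have habs_diff : x * (Real.exp (2*(t'+1)) - Real.exp (2*(t'-1)))
      ≤ δ * (Real.exp (t'-1) * Real.exp T) + δ * (Real.exp (t'+1) * Real.exp T) := by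
    have h1 : ‖N (t'-1) - N (t'+1)‖ ≤ ‖N (t'-1)‖ + ‖N (t'+1)‖ := by
      simpa [sub_eq_add_neg] using norm_add_le (N (t'-1)) (-(N (t'+1)))
    have h2 : ‖N (t'-1) - N (t'+1)‖
        = x * (Real.exp (2*(t'+1)) - Real.exp (2*(t'-1))) := by
      rw [hdiff, norm_mul, hstar, Complex.norm_real, Real.norm_eq_abs, abs_of_nonneg (by linarith)]
    rw [h2] at h1
    exact h1.trans (by exact add_le_add k1 k2)
  -- exp(-4) ≤ 1/2
  have hhalf : Real.exp (-4:ℝ) ≤ 1/2 := by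
    have h5 : (2:ℝ) ≤ Real.exp 4 := by nlinarith [Real.add_one_le_exp (4:ℝ)]
    rw [Real.exp_neg, inv_le_comm₀ (Real.exp_pos 4) (by norm_num)]
    linarith
  have heq4 : Real.exp (2*(t'+1)) * Real.exp (-4:ℝ) = Real.exp (2*(t'-1)) := by
    rw [← Real.exp_add]; ring_nf
  have hsub : Real.exp (2*(t'+1)) / 2 ≤ Real.exp (2*(t'+1)) - Real.exp (2*(t'-1)) := by
    nlinarith [Real.exp_pos (2*(t'+1))]
  have hexp2 : Real.exp (2*(t'+1)) = Real.exp (t'+1) * Real.exp (t'+1) := by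
    rw [← Real.exp_add]; ring_nf
  have het : Real.exp (t'-1) ≤ Real.exp (t'+1) := Real.exp_le_exp.mpr (by linarith)
  -- x * exp(t'+1) ≤ 4 δ exp T
  have hx2 : x * Real.exp (t'+1) ≤ 4 * δ * Real.exp T := by
    have hq : x * Real.exp (t'+1) * Real.exp (t'+1) ≤ 4*δ*Real.exp T * Real.exp (t'+1) := by
      nlinarith [mul_le_mul_of_nonneg_left hsub hx0,
        mul_le_mul_of_nonneg_left het (mul_pos hδ (Real.exp_pos T)).le]
    exact le_of_mul_le_mul_right hq (Real.exp_pos _)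
  -- x ≤ 4 E δ
  have hx4 : x ≤ 4 * E * δ := by
    have h1 : Real.exp (-(t'+1)) ≤ Real.exp C₀ := Real.exp_le_exp.mpr (by linarith)
    have h2 : x * Real.exp (t'+1) * Real.exp (-(t'+1)) ≤ 4*δ*Real.exp T * Real.exp C₀ :=
      mul_le_mul hx2 h1 (Real.exp_pos _).le (by positivity)
    have h3 : Real.exp (t'+1) * Real.exp (-(t'+1)) = 1 := by
      rw [← Real.exp_add, show (t'+1) + (-(t'+1)) = 0 by ring, Real.exp_zero]
    rw [mul_assoc, h3, mul_one] at h2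
    have h4 : Real.exp T * Real.exp C₀ = E := by rw [hE_def, ← Real.exp_add]
    have h5 : x ≤ 4*δ*(Real.exp T * Real.exp C₀) := by linarith [h2]
    rw [h4] at h5
    linarith
  -- x * exp(2(t'-1)) ≤ 4 E δ
  have hx1 : x * Real.exp (2*(t'-1)) ≤ 4 * E * δ := by
    have h4 : Real.exp (2*(t'-1) - (t'+1)) ≤ Real.exp C₀ := Real.exp_le_exp.mpr (by linarith)
    have h5 : x * Real.exp (t'+1) * Real.exp (2*(t'-1) - (t'+1)) ≤ 4*δ*Real.exp T * Real.exp C₀ :=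
      mul_le_mul hx2 h4 (Real.exp_pos _).le (by positivity)
    rw [mul_assoc, ← Real.exp_add, show (t'+1) + (2*(t'-1) - (t'+1)) = 2*(t'-1) by ring] at h5
    have h6 : Real.exp T * Real.exp C₀ = E := by rw [hE_def, ← Real.exp_add]
    have h7 : x * Real.exp (2*(t'-1)) ≤ 4*δ*(Real.exp T * Real.exp C₀) := by linarith [h5]
    rw [h6] at h7
    linarith
  -- bound on P
  obtain ⟨P, hP_def⟩ : ∃ P : ℂ, P = α^2*z' - β^2*star z' + α*β*(1 - z'*star z') := ⟨_, rfl⟩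
  have hPid : P = N (t'-1) + star α * β * ((Real.exp (2*(t'-1)) : ℝ) : ℂ) := by
    have hs : star (-(star β) * z' + star α) = -β * star z' + α := by
      simp [star_mul, mul_comm]
    simp only [hP_def, hN, hs]
    ring
  have hP : ‖P‖ ≤ 5 * E * δ := by
    have h1 : ‖P‖ ≤ ‖N (t'-1)‖ + x * Real.exp (2*(t'-1)) := by
      calc ‖P‖ ≤ ‖N (t'-1)‖
            + ‖star α * β * ((Real.exp (2*(t'-1)) : ℝ) : ℂ)‖ := by
            rw [hPid]; exact norm_add_le _ _
        _ = ‖N (t'-1)‖ + x * Real.exp (2*(t'-1)) := by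
            rw [norm_mul, hstar, Complex.norm_real, Real.norm_eq_abs, abs_of_pos (Real.exp_pos _)]
    have h2 : δ * (Real.exp (t'-1) * Real.exp T) ≤ E * δ := by
      have h3 : Real.exp (t'-1) ≤ Real.exp C₀ := Real.exp_le_exp.mpr (by linarith)
      have h4 : Real.exp C₀ * Real.exp T = E := by rw [hE_def, ← Real.exp_add, add_comm]
      have h5 : δ * (Real.exp (t'-1) * Real.exp T) ≤ δ * (Real.exp C₀ * Real.exp T) :=
        mul_le_mul_of_nonneg_left (mul_le_mul_of_nonneg_right h3 (Real.exp_pos T).le) hδ.le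
      rw [h4] at h5
      linarith
    calc ‖P‖ ≤ ‖N (t'-1)‖ + x * Real.exp (2*(t'-1)) := h1
      _ ≤ δ * (Real.exp (t'-1) * Real.exp T) + 4 * E * δ := add_le_add k1 hx1
      _ ≤ E * δ + 4 * E * δ := by linarith
      _ = 5 * E * δ := by ring
  -- abs facts
  have hxab : x = ‖α‖ * ‖β‖ := by rw [hx_def, norm_mul]
  have haone : ‖α‖ ≤ 1 := by
    nlinarith [Complex.sq_norm α, Complex.normSq_nonneg β, norm_nonneg α]
  have hbone : ‖β‖ ≤ 1 := by
    nlinarith [Complex.sq_norm β, Complex.normSq_nonneg α, norm_nonneg β]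
  have hu : ‖1 - z'*star z'‖ ≤ 1 + C₀^2 := by
    have h1 : ‖1 - z'*star z'‖ ≤ ‖(1:ℂ)‖ + ‖z'*star z'‖ := by
      simpa [sub_eq_add_neg] using norm_add_le (1:ℂ) (-(z'*star z'))
    have h2 : ‖z'*star z'‖ = ‖z'‖ * ‖z'‖ := by
      rw [norm_mul, abs_star']
    rw [norm_one, h2] at h1
    nlinarith [norm_nonneg z']
  have hfirst : x ≤ 100*(1+C₀)^2*E*δ := by nlinarith [hEδ, p1, p2]
  have hCδ : 100*(1+C₀)^2*Real.exp (T+C₀)*δ = 100*(1+C₀)^2*E*δ := by rw [hE_def]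
  refine ⟨by rw [hCδ, ← hx_def]; exact hfirst, ?_⟩
  -- case split
  rcases le_or_gt (1/2) (Complex.normSq α) with hcase | hcase
  · -- |α| large
    have hago : 1/2 ≤ ‖α‖ := by
      nlinarith [Complex.sq_norm α, norm_nonneg α]
    have hmain : (‖α‖)^2 * ‖z'‖
        ≤ 5*E*δ + (‖β‖)^2 * ‖z'‖
          + (‖α‖ * ‖β‖)*(1+C₀^2) := by
      have hid : α^2*z' = P + β^2*star z' + (-(α*β*(1 - z'*star z'))) := by
        rw [hP_def]; ring
      have h1 : ‖α^2*z'‖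
          ≤ ‖P‖ + ‖β^2*star z'‖ + ‖α*β*(1 - z'*star z')‖ := by
        rw [hid]
        calc ‖P + β^2*star z' + (-(α*β*(1 - z'*star z')))‖
            ≤ ‖P + β^2*star z'‖ + ‖-(α*β*(1 - z'*star z'))‖ :=
              norm_add_le _ _
          _ ≤ ‖P‖ + ‖β^2*star z'‖ + ‖α*β*(1 - z'*star z')‖ := by
              rw [norm_neg]
              exact add_le_add_left (norm_add_le _ _) _
      rw [norm_mul, norm_pow] at h1
      rw [norm_mul, norm_pow, abs_star'] at h1
      rw [norm_mul] at h1
      have h2 : ‖α*β‖ * ‖1 - z'*star z'‖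
          ≤ (‖α‖ * ‖β‖) * (1+C₀^2) := by
        rw [norm_mul]
        exact mul_le_mul_of_nonneg_left hu
          (mul_nonneg (norm_nonneg _) (norm_nonneg _))
      linarith [hP, h1, h2]
    have := auxmain C₀ E δ hC₀ hE hδ (‖α‖) (‖β‖) (‖z'‖)
      (norm_nonneg β) (norm_nonneg z') hago hbone (by linarith [hx4, hxab]) hz hmain
    exact ⟨Or.inr (by rw [hCδ]; exact this.1), by rw [hCδ]; exact this.2⟩
  · -- |β| large
    have hb2 : 1/2 ≤ Complex.normSq β := by linarith
    have hbgo : 1/2 ≤ ‖β‖ := by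
      nlinarith [Complex.sq_norm β, norm_nonneg β]
    have hmain : (‖β‖)^2 * ‖z'‖
        ≤ 5*E*δ + (‖α‖)^2 * ‖z'‖
          + (‖β‖ * ‖α‖)*(1+C₀^2) := by
      have hid : β^2*star z' = (-P) + α^2*z' + α*β*(1 - z'*star z') := by
        rw [hP_def]; ring
      have h1 : ‖β^2*star z'‖
          ≤ ‖P‖ + ‖α^2*z'‖ + ‖α*β*(1 - z'*star z')‖ := by
        rw [hid]
        calc ‖(-P) + α^2*z' + α*β*(1 - z'*star z')‖
            ≤ ‖(-P) + α^2*z'‖ + ‖α*β*(1 - z'*star z')‖ :=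
              norm_add_le _ _
          _ ≤ ‖-P‖ + ‖α^2*z'‖ + ‖α*β*(1 - z'*star z')‖ :=
              add_le_add_left (norm_add_le _ _) _
          _ = ‖P‖ + ‖α^2*z'‖ + ‖α*β*(1 - z'*star z')‖ := by
              rw [norm_neg]
      rw [norm_mul, norm_pow, abs_star'] at h1
      rw [norm_mul, norm_pow] at h1
      rw [norm_mul] at h1
      have h2 : ‖α*β‖ * ‖1 - z'*star z'‖
          ≤ (‖β‖ * ‖α‖) * (1+C₀^2) := by
        rw [norm_mul, mul_comm (‖α‖)]
        exact mul_le_mul_of_nonneg_left hu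
          (mul_nonneg (norm_nonneg _) (norm_nonneg _))
      linarith [hP, h1, h2]
    have := auxmain C₀ E δ hC₀ hE hδ (‖β‖) (‖α‖) (‖z'‖)
      (norm_nonneg α) (norm_nonneg z') hbgo haone (by rw [mul_comm]; linarith [hx4, hxab]) hz hmain
    exact ⟨Or.inl (by rw [hCδ]; exact this.1), by rw [hCδ]; exact this.2⟩
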